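/- Let R be a ring and I a two-sided ideal of R that is finitely generated as a left R-module. Then the class of I-power torsion left R-modules is closed under submodules, quotient modules, arbitrary direct sums, and extensions: if 0 → M₁ → M₂ → M₃ → 0 is a short exact sequence of left R-modules with M₁ and M₃ I-power torsion, then M₂ is I-power torsion. -/
import Mathlib

/-- `M` is an `I`-power torsion module: every element is annihilated by some power
of `I`. -/
def IsIPowerTorsion {R : Type*} [Ring R] (I : Submodule ℕ R)
    (M : Type*) [AddCommGroup M] [Module R M] : Prop :=
  ∀ m : M, ∃ n : ℕ, ∀ a ∈ (I ^ n : Submodule ℕ R), a • m = 0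

section Aux

variable {R : Type*} [Ring R] {I : Submodule ℕ R}

/-- Powers `I^(n+1)` are right ideals. -/
lemma aux_right_ideal (hright : ∀ r ∈ I, ∀ a : R, r * a ∈ I) :
    ∀ n : ℕ, ∀ x ∈ (I ^ (n + 1) : Submodule ℕ R), ∀ r : R,
      x * r ∈ (I ^ (n + 1) : Submodule ℕ R) := by
  intro n
  induction n with
  | zero => simpa using hright
  | succ n ih =>
    intro x hx r
    rw [pow_succ] at hx ⊢
    refine Submodule.mul_induction_on hx (fun a ha b hb => ?_) (fun x y hx' hy' => ?_)
    · rw [mul_assoc]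
      exact Submodule.mul_mem_mul ha (hright b hb r)
    · rw [add_mul]; exact add_mem hx' hy'

lemma aux_pow_le (hright : ∀ r ∈ I, ∀ a : R, r * a ∈ I) :
    ∀ n k : ℕ, n + 1 ≤ k → (I ^ k : Submodule ℕ R) ≤ I ^ (n + 1) := by
  intro n k hk
  induction k, hk using Nat.le_induction with
  | base => exact le_rfl
  | succ k hk ih =>
    refine le_trans ?_ ih
    obtain ⟨m, rfl⟩ : ∃ m, k = m + 1 := ⟨k - 1, by omega⟩
    rw [pow_succ]
    exact Submodule.mul_le.mpr fun a ha b hb => aux_right_ideal hright m a ha b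

lemma aux_mono (hright : ∀ r ∈ I, ∀ a : R, r * a ∈ I)
    {M : Type*} [AddCommGroup M] [Module R M] {m : M} {n k : ℕ} (hnk : n ≤ k)
    (h : ∀ a ∈ (I ^ n : Submodule ℕ R), a • m = 0) :
    ∀ a ∈ (I ^ k : Submodule ℕ R), a • m = 0 := by
  cases n with
  | zero =>
    have h1 : (1 : R) ∈ (I ^ 0 : Submodule ℕ R) := by
      rw [pow_zero]
      exact Submodule.one_le.mp le_rfl
    have hm : m = 0 := by simpa using h 1 h1
    simp [hm]
  | succ n =>
    cases k with
    | zero => omega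
    | succ k => exact fun a ha => h a (aux_pow_le hright n (k + 1) (by omega) ha)

open Classical in
/-- The finite set of `(n+1)`-fold products of elements of `S`. -/
noncomputable def prodSet (S : Finset R) : ℕ → Finset R
  | 0 => S
  | (n + 1) => (S ×ˢ prodSet S n).image fun p => p.1 * p.2

lemma prodSet_subset {S : Finset R} (hS : (S : Set R) ⊆ (I : Set R)) :
    ∀ n : ℕ, (prodSet S n : Set R) ⊆ ((I ^ (n + 1) : Submodule ℕ R) : Set R) := by
  intro n
  induction n with
  | zero => intro x hx; simpa [prodSet] using hS hx
  | succ n ih =>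
    intro x hx
    simp only [prodSet, Finset.coe_image, Set.mem_image, Finset.mem_coe,
      Finset.mem_product] at hx
    obtain ⟨⟨s, t⟩, ⟨hs, ht⟩, rfl⟩ := hx
    rw [pow_succ']
    exact Submodule.mul_mem_mul (hS hs) (ih ht)

lemma mem_span_prodSet (hright : ∀ r ∈ I, ∀ a : R, r * a ∈ I) {S : Finset R}
    (hfg : (Submodule.span R (S : Set R) : Set R) = (I : Set R)) :
    ∀ n : ℕ, ∀ x ∈ (I ^ (n + 1) : Submodule ℕ R),
      x ∈ Submodule.span R ((prodSet S n : Finset R) : Set R) := by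
  intro n
  induction n with
  | zero =>
    intro x hx
    rw [pow_one] at hx
    show x ∈ (Submodule.span R (S : Set R) : Set R)
    rw [hfg]; exact hx
  | succ n ih =>
    intro x hx
    rw [pow_succ'] at hx
    refine Submodule.mul_induction_on hx (fun a ha b hb => ?_) (fun x y hx' hy' => add_mem hx' hy')
    have hb' := ih b hb
    clear hb hx
    induction hb' using Submodule.span_induction generalizing a with
    | mem t ht =>
      have ha' : a ∈ (Submodule.span R (S : Set R) : Set R) := by rw [hfg]; exact ha
      clear ha
      induction ha' using Submodule.span_induction with
      | mem s hs =>
        refine Submodule.subset_span ?_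
        classical
        simp only [prodSet, Finset.coe_image, Set.mem_image, Finset.mem_coe,
          Finset.mem_product]
        exact ⟨(s, t), ⟨hs, ht⟩, rfl⟩
      | zero => rw [zero_mul]; exact zero_mem _
      | add x y hx hy ihx ihy => rw [add_mul]; exact add_mem ihx ihy
      | smul r x hx ihx =>
        rw [smul_eq_mul, mul_assoc]
        exact Submodule.smul_mem _ r ihx
    | zero => rw [mul_zero]; exact zero_mem _
    | add x y hx hy ihx ihy => rw [mul_add]; exact add_mem (ihx a ha) (ihy a ha)
    | smul r x hx ihx =>
      rw [smul_eq_mul, ← mul_assoc]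
      exact ihx (a * r) (hright a ha r)

end Aux

/-- For a two-sided ideal `I` of `R`, finitely generated as a left `R`-module, the
class of `I`-power torsion left `R`-modules is closed under submodules, quotients,
arbitrary direct sums, and extensions (i.e. it is a hereditary torsion class). -/
theorem torsionClass_closure {R : Type*} [Ring R] (I : Submodule ℕ R)
    (hleft : ∀ r ∈ I, ∀ a : R, a * r ∈ I)
    (hright : ∀ r ∈ I, ∀ a : R, r * a ∈ I)
    (hfg : ∃ S : Finset R, (Submodule.span R (S : Set R) : Set R) = (I : Set R)) :
    -- closed under submodules
    (∀ (M : Type*) [AddCommGroup M] [Module R M] (N : Submodule R M),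
      IsIPowerTorsion I M → IsIPowerTorsion I N) ∧
    -- closed under quotient modules
    (∀ (M : Type*) [AddCommGroup M] [Module R M] (N : Submodule R M),
      IsIPowerTorsion I M → IsIPowerTorsion I (M ⧸ N)) ∧
    -- closed under arbitrary direct sums
    (∀ (ι : Type*) [DecidableEq ι] (M : ι → Type*)
      [∀ i, AddCommGroup (M i)] [∀ i, Module R (M i)],
      (∀ i, IsIPowerTorsion I (M i)) → IsIPowerTorsion I (DirectSum ι M)) ∧
    -- closed under extensions
    (∀ (M₁ M₂ M₃ : Type*) [AddCommGroup M₁] [AddCommGroup M₂] [AddCommGroup M₃]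
      [Module R M₁] [Module R M₂] [Module R M₃]
      (f : M₁ →ₗ[R] M₂) (g : M₂ →ₗ[R] M₃),
      Function.Injective f → Function.Surjective g →
      LinearMap.range f = LinearMap.ker g →
      IsIPowerTorsion I M₁ → IsIPowerTorsion I M₃ → IsIPowerTorsion I M₂) := by
  obtain ⟨S, hS⟩ := hfg
  refine ⟨?_, ?_, ?_, ?_⟩
  · -- submodules
    intro M _ _ N h m
    obtain ⟨n, hn⟩ := h (m : M)
    exact ⟨n, fun a ha => Subtype.ext (by simpa using hn a ha)⟩
  · -- quotients
    intro M _ _ N h m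
    obtain ⟨x, rfl⟩ := Submodule.Quotient.mk_surjective N m
    obtain ⟨n, hn⟩ := h x
    refine ⟨n, fun a ha => ?_⟩
    rw [← Submodule.Quotient.mk_smul, hn a ha, Submodule.Quotient.mk_zero]
  · -- direct sums
    intro ι _ M _ _ h m
    induction m using DirectSum.induction_on with
    | zero => exact ⟨0, fun a _ => smul_zero a⟩
    | of i x =>
      obtain ⟨n, hn⟩ := h i x
      refine ⟨n, fun a ha => ?_⟩
      rw [← DirectSum.lof_eq_of R, ← map_smul, hn a ha, map_zero]
    | add x y hx hy =>
      obtain ⟨n₁, hn₁⟩ := hx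
      obtain ⟨n₂, hn₂⟩ := hy
      refine ⟨max n₁ n₂, fun a ha => ?_⟩
      rw [smul_add, aux_mono hright (le_max_left n₁ n₂) hn₁ a ha,
        aux_mono hright (le_max_right n₁ n₂) hn₂ a ha, add_zero]
  · -- extensions
    intro M₁ M₂ M₃ _ _ _ _ _ _ f g hf hg hfg h₁ h₃ m₂
    obtain ⟨n₃, hn₃⟩ := h₃ (g m₂)
    have hn₃' : ∀ a ∈ (I ^ (n₃ + 1) : Submodule ℕ R), a • g m₂ = 0 :=
      aux_mono hright (Nat.le_succ n₃) hn₃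
    have hker : ∀ t ∈ (prodSet S n₃ : Set R), ∃ y : M₁, f y = t • m₂ := by
      intro t ht
      have hg0 : g (t • m₂) = 0 := by
        rw [map_smul]
        exact hn₃' t (prodSet_subset (by rw [← hS]; exact Submodule.subset_span) n₃ ht)
      have : t • m₂ ∈ LinearMap.range f := by rw [hfg]; exact hg0
      obtain ⟨y, hy⟩ := this
      exact ⟨y, hy⟩
    classical
    choose y hy using fun (t : R) (ht : t ∈ (prodSet S n₃ : Set R)) => hker t ht
    have hnum : ∀ (t : R) (ht : t ∈ (prodSet S n₃ : Set R)),
        ∃ n : ℕ, ∀ a ∈ (I ^ n : Submodule ℕ R), a • y t ht = 0 := fun t ht => h₁ (y t ht)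
    choose nt hnt using hnum
    set N : ℕ :=
      ((prodSet S n₃).sup fun t =>
        if ht : t ∈ (prodSet S n₃ : Set R) then nt t ht else 0) + 1 with hN
    have hNkill : ∀ (t : R) (ht : t ∈ (prodSet S n₃ : Set R)),
        ∀ a ∈ (I ^ N : Submodule ℕ R), a • y t ht = 0 := by
      intro t ht
      refine aux_mono hright ?_ (hnt t ht)
      have h1 := Finset.le_sup
        (f := fun t => if ht : t ∈ (prodSet S n₃ : Set R) then nt t ht else 0)
        (Finset.mem_coe.mp ht)
      simp only [dif_pos ht] at h1
      rw [hN]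
      exact le_trans h1 (Nat.le_succ _)
    obtain ⟨N', hN'⟩ : ∃ N', N = N' + 1 := ⟨_, hN⟩
    let L : Submodule R M₁ :=
      { carrier := { m | ∀ a ∈ (I ^ N : Submodule ℕ R), a • m = 0 }
        add_mem' := fun hx hy a ha => by rw [smul_add, hx a ha, hy a ha, add_zero]
        zero_mem' := fun a _ => smul_zero a
        smul_mem' := fun r x hx a ha => by
          rw [smul_smul]
          exact hx (a * r) (by rw [hN']; exact aux_right_ideal hright N' a (hN' ▸ ha) r) }
    have key : ∀ b ∈ (I ^ (n₃ + 1) : Submodule ℕ R), b • m₂ ∈ L.map f := by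
      intro b hb
      have hb' := mem_span_prodSet hright hS n₃ b hb
      clear hb
      induction hb' using Submodule.span_induction with
      | mem t ht => exact ⟨y t ht, hNkill t ht, hy t ht⟩
      | zero => rw [zero_smul]; exact zero_mem _
      | add x y' hx hy' ihx ihy => rw [add_smul]; exact add_mem ihx ihy
      | smul r x hx ihx =>
        rw [smul_eq_mul, mul_smul]
        exact Submodule.smul_mem _ r ihx
    refine ⟨N + (n₃ + 1), fun a ha => ?_⟩
    rw [pow_add] at ha
    refine Submodule.mul_induction_on ha (fun c hc b hb => ?_) (fun x y' hx hy' => ?_)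
    · obtain ⟨z, hz, hz'⟩ := key b hb
      rw [mul_smul, ← hz', ← map_smul, hz c hc, map_zero]
    · rw [add_smul, hx, hy', add_zero]
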